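/- Suppose that zer A ≠ ∅, that for every k ∈ ℕ, ξ_k ≤ 1, that ∑_k |α_k| < ∞, ∑_k |1 − β_k − γ_k| < ∞ and ∑_k ‖δ_k e_k‖ < ∞, and that one of the following holds: (1) γ_k → 1, and either inf_k c_k > 0 or c_k → ∞; (2) limsup_{k→∞} |β_k| < 1, 0 < liminf_{k→∞} (1 − β_k − γ_k/2) ≤ limsup_{k→∞} (1 − β_k − γ_k/2) < 1, 1 − c_k/c_{k+1} → 0, and either inf_k c_k > 0 or c_k → ∞; (3) inf_{k∈ℕ} γ_k(β_k + γ_k) ≥ 0, liminf_{k→∞} γ_k(2β_k + γ_k) > 0, and either inf_k c_k > 0 or c_k → ∞; (4) inf_{k∈ℕ} γ_k(β_k + γ_k) ≥ 0 and inf_{k∈ℕ} γ_k(2β_k + γ_k) ≥ 0, ∑_k γ_k(2β_k + γ_k) = ∞, for every k, |β_k + γ_k|·|γ_k| ≤ max{1 − |β_k|, 2 − 2|β_k + γ_k/2|}, and inf_k c_k > 0 with ∑_k |c_{k+1} − c_k| < ∞. Then the sequence (x_k)_{k∈ℕ} converges weakly to a point of zer A; that is, there exists x ∈ zer A such that ⟨x_k,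 w⟩ → ⟨x, w⟩ for every w ∈ H. -/

import Mathlib

set_option maxHeartbeats 1000000

open Filter InnerProductSpace

section Aux

/-- A nonnegative sequence with `d (k+1) ≤ d k + η k`, `η` summable nonneg, converges. -/
lemma ppa_aux_conv (d η : ℕ → ℝ) (hd : ∀ k, 0 ≤ d k)
    (hstep : ∀ k, d (k + 1) ≤ d k + η k) (hη0 : ∀ k, 0 ≤ η k) (hη : Summable η) :
    ∃ l, Tendsto d atTop (nhds l) := by
  set D : ℕ → ℝ := fun k => d k + ∑' j, η (j + k) with hD
  have htail : Tendsto (fun k => ∑' j, η (j + k)) atTop (nhds 0) := by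
    simpa using tendsto_sum_nat_add η
  have htail0 : ∀ k, 0 ≤ ∑' j, η (j + k) := by
    intro k; exact tsum_nonneg (fun j => hη0 _)
  have hanti : Antitone D := by
    apply antitone_nat_of_succ_le
    intro k
    have hsum : (∑' j, η (j + k)) = η k + ∑' j, η (j + (k + 1)) := by
      have hsg : Summable (fun j => η (j + k)) := (summable_nat_add_iff k).2 hη
      have := Summable.tsum_eq_zero_add hsg
      simpa [add_comm, add_assoc, add_left_comm] using this
    have := hstep k
    simp only [hD]
    rw [hsum]
    linarith
  have hbdd : BddBelow (Set.range D) := by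
    refine ⟨0, ?_⟩
    rintro _ ⟨k, rfl⟩
    exact add_nonneg (hd k) (htail0 k)
  have hconv : Tendsto D atTop (nhds (⨅ k, D k)) :=
    tendsto_atTop_ciInf hanti hbdd
  refine ⟨⨅ k, D k, ?_⟩
  have : d = fun k => D k - ∑' j, η (j + k) := by
    funext k; simp [hD]
  rw [this]
  simpa using hconv.sub htail

lemma ppa_cluster_le (t : ℕ → ℝ) (r b : ℝ) (θ : ℕ → ℝ)
    (hcl : MapClusterPt r atTop t)
    (hub : ∀ᶠ k in atTop, b ≤ t k + θ k)
    (hθ : Tendsto θ atTop (nhds 0)) : b ≤ r := by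
  by_contra hlt
  push_neg at hlt
  set ε := (b - r) / 2 with hε
  have hεpos : 0 < ε := by simp [hε]; linarith
  have hfreq : ∃ᶠ k in atTop, t k ∈ Set.Ioo (r - ε) (r + ε) :=
    (mapClusterPt_iff_frequently.1 hcl) _ (Ioo_mem_nhds (by linarith) (by linarith))
  have hev : ∀ᶠ k in atTop, |θ k| < ε := by
    filter_upwards [hθ (Metric.ball_mem_nhds 0 hεpos)] with k hk
    simpa [Real.norm_eq_abs] using hk
  obtain ⟨k, hk1, hk2, hk3⟩ := (hfreq.and_eventually (hub.and hev)).exists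
  have h1 : t k < r + ε := hk1.2
  have h2 : b ≤ t k + θ k := hk2
  have habs := abs_lt.1 hk3
  simp [hε] at *
  linarith

lemma ppa_cluster_eq (t : ℕ → ℝ) (r l : ℝ)
    (hcl : MapClusterPt r atTop t) (hl : Tendsto t atTop (nhds l)) : r = l := by
  have : NeBot (nhds r ⊓ map t atTop) := hcl
  have h2 : NeBot (nhds r ⊓ nhds l) := by
    refine this.mono (inf_le_inf_left _ ?_)
    exact hl
  exact eq_of_nhds_neBot h2

variable {H : Type*} [NormedAddCommGroup H] [InnerProductSpace ℝ H]

lemma ppa_step_a (a v : H) (β γ : ℝ) (hkey : ‖v‖ ^ 2 ≤ ⟪a, v⟫_ℝ)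
    (hξ : |β + γ / 2| + |γ / 2| ≤ 1) :
    ‖β • a + γ • (a - v)‖ ≤ ‖a‖ := by
  have hrefl : ‖a - (2:ℝ) • v‖ ≤ ‖a‖ := by
    have hexp : ‖a - (2:ℝ) • v‖ ^ 2 = ‖a‖ ^ 2 - 4 * ⟪a, v⟫_ℝ + 4 * ‖v‖ ^ 2 := by
      rw [norm_sub_sq_real, real_inner_smul_right, norm_smul]
      simp [Real.norm_eq_abs]
      ring
    have h2 : ‖a - (2:ℝ) • v‖ ^ 2 ≤ ‖a‖ ^ 2 := by rw [hexp]; linarith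
    nlinarith [norm_nonneg (a - (2:ℝ) • v), norm_nonneg a]
  have hdecomp : β • a + γ • (a - v) = (β + γ / 2) • a + (γ / 2) • (a - (2:ℝ) • v) := by
    simp only [smul_sub, smul_smul, add_smul, smul_add]
    module
  rw [hdecomp]
  calc ‖(β + γ / 2) • a + (γ / 2) • (a - (2:ℝ) • v)‖
      ≤ ‖(β + γ / 2) • a‖ + ‖(γ / 2) • (a - (2:ℝ) • v)‖ := norm_add_le _ _
    _ = |β + γ / 2| * ‖a‖ + |γ / 2| * ‖a - (2:ℝ) • v‖ := by
        rw [norm_smul, norm_smul, Real.norm_eq_abs, Real.norm_eq_abs]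
    _ ≤ |β + γ / 2| * ‖a‖ + |γ / 2| * ‖a‖ := by
        have := abs_nonneg (γ / 2)
        nlinarith
    _ = (|β + γ / 2| + |γ / 2|) * ‖a‖ := by ring
    _ ≤ 1 * ‖a‖ := by nlinarith [norm_nonneg a]
    _ = ‖a‖ := one_mul _

lemma ppa_step_b (a v : H) (β γ : ℝ) (hkey : ‖v‖ ^ 2 ≤ ⟪a, v⟫_ℝ)
    (hξ : |β + γ / 2| + |γ / 2| ≤ 1) (hpos : 0 ≤ γ * (β + γ)) :
    ‖β • a + γ • (a - v)‖ ^ 2 ≤ ‖a‖ ^ 2 - γ * (2 * β + γ) * ‖v‖ ^ 2 := by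
  have hb1 : |β + γ| ≤ 1 := by
    have h : |β + γ| ≤ |β + γ / 2| + |γ / 2| := by
      have h2 : β + γ = (β + γ / 2) + γ / 2 := by ring
      rw [h2]
      exact abs_add_le _ _
    linarith
  have hsq : (β + γ) ^ 2 ≤ 1 := by nlinarith [abs_nonneg (β + γ), sq_abs (β + γ)]
  have hdecomp : β • a + γ • (a - v) = (β + γ) • a - γ • v := by
    simp only [smul_sub, add_smul]; abel
  rw [hdecomp]
  have hexp : ‖(β + γ) • a - γ • v‖ ^ 2
      = (β + γ) ^ 2 * ‖a‖ ^ 2 - 2 * (γ * (β + γ)) * ⟪a, v⟫_ℝ + γ ^ 2 * ‖v‖ ^ 2 := by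
    rw [norm_sub_sq_real, real_inner_smul_left, real_inner_smul_right, norm_smul, norm_smul]
    simp [Real.norm_eq_abs, mul_pow, sq_abs]
    ring
  rw [hexp]
  nlinarith [mul_nonneg hpos (sub_nonneg.2 hkey), sq_nonneg ‖a‖, sq_nonneg ‖v‖,
    mul_nonneg (sub_nonneg.2 hsq) (sq_nonneg ‖a‖)]

lemma ppa_L (v w : H) (β : ℝ) (hβ1 : β ≤ 1) (hβ2 : -1 ≤ β)
    (hfirm : ‖w - v‖ ^ 2 ≤ ⟪-((1 - β) • v), w - v⟫_ℝ) :
    ‖w‖ ≤ ‖v‖ := by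
  have hexp : ⟪-((1 - β) • v), w - v⟫_ℝ = -(1 - β) * (⟪v, w⟫_ℝ - ‖v‖ ^ 2) := by
    rw [inner_neg_left, real_inner_smul_left, inner_sub_right, ← real_inner_self_eq_norm_sq]
    ring
  rw [hexp] at hfirm
  have hns : ‖w - v‖ ^ 2 = ‖w‖ ^ 2 - 2 * ⟪w, v⟫_ℝ + ‖v‖ ^ 2 := by
    rw [norm_sub_sq_real]
  rw [hns] at hfirm
  have hsym : ⟪v, w⟫_ℝ = ⟪w, v⟫_ℝ := real_inner_comm _ _
  rw [hsym] at hfirm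
  have h1 : ‖w‖ ^ 2 ≤ -β * ‖v‖ ^ 2 + (1 + β) * ⟪w, v⟫_ℝ := by linarith
  have h2 : ⟪w, v⟫_ℝ ≤ ‖w‖ * ‖v‖ := real_inner_le_norm _ _
  by_contra hlt
  push_neg at hlt
  nlinarith [norm_nonneg v, norm_nonneg w, mul_pos (sub_pos.2 hlt)
    (by nlinarith [norm_nonneg v, norm_nonneg w] : (0:ℝ) < ‖w‖ - β * ‖v‖)]

variable (A : H → Set H)
variable (hmono : ∀ x y xu yv : H, xu ∈ A x → yv ∈ A y → 0 ≤ ⟪x - y, xu - yv⟫_ℝ)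
variable (J : ℝ → H → H)
variable (hJ : ∀ c : ℝ, 0 < c → ∀ x : H, (1 / c) • (x - J c x) ∈ A (J c x))

include hmono hJ

lemma ppa_firm_disp {c : ℝ} (hc : 0 < c) (x y : H) :
    ‖(x - J c x) - (y - J c y)‖ ^ 2 ≤ ⟪x - y, (x - J c x) - (y - J c y)⟫_ℝ := by
  have h := hmono (J c x) (J c y) _ _ (hJ c hc x) (hJ c hc y)
  have h2 : (0:ℝ) ≤ (1 / c) * ⟪J c x - J c y, (x - J c x) - (y - J c y)⟫_ℝ := by
    calc (0:ℝ) ≤ ⟪J c x - J c y, (1/c) • (x - J c x) - (1/c) • (y - J c y)⟫_ℝ := h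
    _ = (1 / c) * ⟪J c x - J c y, (x - J c x) - (y - J c y)⟫_ℝ := by
        rw [← smul_sub, real_inner_smul_right]
  have h3 : (0:ℝ) ≤ ⟪J c x - J c y, (x - J c x) - (y - J c y)⟫_ℝ :=
    by by_contra hneg; push_neg at hneg; nlinarith [one_div_pos.2 hc]
  have hid : ⟪x - y, (x - J c x) - (y - J c y)⟫_ℝ
      = ‖(x - J c x) - (y - J c y)‖ ^ 2 + ⟪J c x - J c y, (x - J c x) - (y - J c y)⟫_ℝ := by
    rw [← real_inner_self_eq_norm_sq, ← inner_add_left]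
    congr 1
    abel
  rw [hid]
  linarith

lemma ppa_J_nonexp {c : ℝ} (hc : 0 < c) (x y : H) :
    ‖J c x - J c y‖ ≤ ‖x - y‖ := by
  have h := hmono (J c x) (J c y) _ _ (hJ c hc x) (hJ c hc y)
  have h3 : (0:ℝ) ≤ ⟪J c x - J c y, (x - J c x) - (y - J c y)⟫_ℝ := by
    have h2 : (0:ℝ) ≤ (1 / c) * ⟪J c x - J c y, (x - J c x) - (y - J c y)⟫_ℝ := by
      calc (0:ℝ) ≤ ⟪J c x - J c y, (1/c) • (x - J c x) - (1/c) • (y - J c y)⟫_ℝ := h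
      _ = (1 / c) * ⟪J c x - J c y, (x - J c x) - (y - J c y)⟫_ℝ := by
          rw [← smul_sub, real_inner_smul_right]
    by_contra hneg; push_neg at hneg; nlinarith [one_div_pos.2 hc]
  have hid : ⟪J c x - J c y, (x - J c x) - (y - J c y)⟫_ℝ
      = ⟪J c x - J c y, x - y⟫_ℝ - ‖J c x - J c y‖ ^ 2 := by
    rw [← real_inner_self_eq_norm_sq, ← inner_sub_right]
    congr 1
    abel
  have h4 : ‖J c x - J c y‖ ^ 2 ≤ ⟪J c x - J c y, x - y⟫_ℝ := by
    rw [hid] at h3; linarith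
  have h5 : ⟪J c x - J c y, x - y⟫_ℝ ≤ ‖J c x - J c y‖ * ‖x - y‖ :=
    real_inner_le_norm _ _
  nlinarith [norm_nonneg (J c x - J c y), norm_nonneg (x - y)]

lemma ppa_disp_nonexp {c : ℝ} (hc : 0 < c) (x y : H) :
    ‖(x - J c x) - (y - J c y)‖ ≤ ‖x - y‖ := by
  have h := ppa_firm_disp A hmono J hJ hc x y
  have h5 : ⟪x - y, (x - J c x) - (y - J c y)⟫_ℝ ≤ ‖x - y‖ * ‖(x - J c x) - (y - J c y)‖ :=
    real_inner_le_norm _ _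
  nlinarith [norm_nonneg ((x - J c x) - (y - J c y)), norm_nonneg (x - y)]

lemma ppa_res_unique {c : ℝ} (hc : 0 < c) (w q : H)
    (hq : (1 / c) • (w - q) ∈ A q) : q = J c w := by
  have h := hmono q (J c w) _ _ hq (hJ c hc w)
  have h2 : ⟪q - J c w, (1/c) • (w - q) - (1/c) • (w - J c w)⟫_ℝ
      = -((1/c) * ‖q - J c w‖ ^ 2) := by
    rw [← smul_sub, real_inner_smul_right, ← real_inner_self_eq_norm_sq]
    have : w - q - (w - J c w) = -(q - J c w) := by abel
    rw [this, inner_neg_right]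
    ring
  rw [h2] at h
  have h3 : ‖q - J c w‖ ^ 2 ≤ 0 := by
    by_contra hpos
    push_neg at hpos
    nlinarith [one_div_pos.2 hc]
  have : ‖q - J c w‖ = 0 := by nlinarith [norm_nonneg (q - J c w), sq_nonneg ‖q - J c w‖]
  exact sub_eq_zero.1 (norm_eq_zero.1 this)

lemma ppa_res_id {c c' : ℝ} (hc : 0 < c) (hc' : 0 < c') (z : H) :
    ‖J c z - J c' z‖ ≤ (|c - c'| / c') * ‖z - J c' z‖ := by
  set q := J c' z with hq
  set w := (c / c') • z + (1 - c / c') • q with hw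
  have hqA : (1 / c) • (w - q) ∈ A q := by
    have hwq : w - q = (c / c') • (z - q) := by
      simp only [hw, smul_sub, sub_smul, one_smul]
      abel
    have : (1 / c) • (w - q) = (1 / c') • (z - q) := by
      rw [hwq, smul_smul]
      congr 1
      field_simp
    rw [this]
    exact hJ c' hc' z
  have hqJ : q = J c w := ppa_res_unique A hmono J hJ hc w q hqA
  have hzw : z - w = (1 - c / c') • (z - q) := by
    simp only [hw, smul_sub, sub_smul, one_smul]
    abel
  calc ‖J c z - J c' z‖ = ‖J c z - J c w‖ := by rw [← hqJ]
    _ ≤ ‖z - w‖ := ppa_J_nonexp A hmono J hJ hc z w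
    _ = |1 - c / c'| * ‖z - q‖ := by rw [hzw, norm_smul, Real.norm_eq_abs]
    _ = (|c - c'| / c') * ‖z - J c' z‖ := by
        have h1 : 1 - c / c' = (c' - c) / c' := by field_simp
        rw [h1, abs_div, abs_of_pos hc', abs_sub_comm]

lemma ppa_key_p {c : ℝ} (hc : 0 < c) (p : H) (hp : (0:H) ∈ A p) (x : H) :
    ‖x - J c x‖ ^ 2 ≤ ⟪x - p, x - J c x⟫_ℝ := by
  have h := hmono (J c x) p _ _ (hJ c hc x) hp
  have h3 : (0:ℝ) ≤ ⟪J c x - p, x - J c x⟫_ℝ := by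
    have h2 : (0:ℝ) ≤ (1 / c) * ⟪J c x - p, x - J c x⟫_ℝ := by
      calc (0:ℝ) ≤ ⟪J c x - p, (1/c) • (x - J c x) - 0⟫_ℝ := h
      _ = (1 / c) * ⟪J c x - p, x - J c x⟫_ℝ := by
          rw [sub_zero, real_inner_smul_right]
    by_contra hneg; push_neg at hneg; nlinarith [one_div_pos.2 hc]
  have hid : ⟪x - p, x - J c x⟫_ℝ
      = ‖x - J c x‖ ^ 2 + ⟪J c x - p, x - J c x⟫_ℝ := by
    rw [← real_inner_self_eq_norm_sq, ← inner_add_left]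
    congr 1
    abel
  rw [hid]
  linarith

lemma ppa_fixed {c : ℝ} (hc : 0 < c) (p : H) (hp : (0:H) ∈ A p) : J c p = p := by
  have h := ppa_key_p A hmono J hJ hc p hp p
  simp only [sub_self, inner_zero_left] at h
  have h2 : ‖p - J c p‖ = 0 := by nlinarith [norm_nonneg (p - J c p), sq_nonneg ‖p - J c p‖]
  have := sub_eq_zero.1 (norm_eq_zero.1 h2)
  exact this.symm

end Aux

lemma ppa_exists_weak_cluster {H : Type*} [NormedAddCommGroup H] [InnerProductSpace ℝ H]
    [CompleteSpace H] (y : ℕ → H) (B : ℝ) (hB : ∀ k, ‖y k‖ ≤ B) :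
    ∃ z : H, ∀ w : H, MapClusterPt (⟪z, w⟫_ℝ) atTop (fun k => ⟪y k, w⟫_ℝ) := by
  set Φ : ℕ → WeakDual ℝ H := fun k => StrongDual.toWeakDual (toDual ℝ H (y k)) with hΦ
  have hcpt := WeakDual.isCompact_closedBall (𝕜 := ℝ) (E := H) 0 B
  have hle : map Φ atTop ≤ Filter.principal (WeakDual.toStrongDual ⁻¹' Metric.closedBall 0 B) := by
    rw [le_principal_iff]
    refine mem_map.2 (Eventually.of_forall fun k => ?_)
    simp only [Set.mem_preimage, Metric.mem_closedBall, dist_zero_right]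
    have : ‖(toDual ℝ H) (y k)‖ = ‖y k‖ := LinearIsometryEquiv.norm_map _ _
    simpa [hΦ] using (this ▸ hB k : ‖(toDual ℝ H) (y k)‖ ≤ B)
  obtain ⟨f0, hf0mem, hf0⟩ := hcpt hle
  refine ⟨(toDual ℝ H).symm (WeakDual.toStrongDual f0), fun w => ?_⟩
  have heq : ⟪(toDual ℝ H).symm (WeakDual.toStrongDual f0), w⟫_ℝ = f0 w := by
    rw [toDual_symm_apply]
    rfl
  rw [heq]
  have hcont : ContinuousAt (fun f : WeakDual ℝ H => f w) f0 :=
    (WeakDual.eval_continuous w).continuousAt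
  have hmap : ClusterPt (f0 w) (map (fun f : WeakDual ℝ H => f w) (map Φ atTop)) :=
    hf0.map hcont tendsto_map
  have : map (fun f : WeakDual ℝ H => f w) (map Φ atTop)
      = map (fun k => ⟪y k, w⟫_ℝ) atTop := by
    rw [map_map]
    congr 1
  exact hmap.mono (le_of_eq this.symm) |>.mono le_rfl

theorem stmt17 {H : Type*} [NormedAddCommGroup H] [InnerProductSpace ℝ H] [CompleteSpace H]
    (A : H → Set H)
    (hmono : ∀ x y xu yv : H, xu ∈ A x → yv ∈ A y → 0 ≤ ⟪x - y, xu - yv⟫_ℝ)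
    (hmax : ∀ x xu : H, (∀ y yv : H, yv ∈ A y → 0 ≤ ⟪x - y, xu - yv⟫_ℝ) → xu ∈ A x)
    (J : ℝ → H → H)
    (hJ : ∀ c : ℝ, 0 < c → ∀ x : H, (1 / c) • (x - J c x) ∈ A (J c x))
    (u : H) (e : ℕ → H) (c α β γ δ : ℕ → ℝ) (hc : ∀ k, 0 < c k)
    (x : ℕ → H)
    (hrec : ∀ k, x (k + 1) = α k • u + β k • x k + γ k • J (c k) (x k) + δ k • e k)
    (ξ : ℕ → ℝ) (hξ : ∀ k, ξ k = |β k + γ k / 2| + |γ k / 2|)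
    (hzer : ∃ p : H, (0 : H) ∈ A p)
    (hξ1 : ∀ k, ξ k ≤ 1)
    (hαsum : Summable (fun k => |α k|))
    (hβγsum : Summable (fun k => |1 - β k - γ k|))
    (hdesum : Summable (fun k => ‖δ k • e k‖))
    (hcase :
      -- (1)
      (Tendsto γ atTop (nhds 1) ∧
        ((∃ ε > (0 : ℝ), ∀ k, ε ≤ c k) ∨ Tendsto c atTop atTop)) ∨
      -- (2)
      ((∃ r < (1 : ℝ), ∀ᶠ k in atTop, |β k| ≤ r) ∧
        (∃ a > (0 : ℝ), ∀ᶠ k in atTop, a ≤ 1 - β k - γ k / 2) ∧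
        (∃ b < (1 : ℝ), ∀ᶠ k in atTop, 1 - β k - γ k / 2 ≤ b) ∧
        Tendsto (fun k => 1 - c k / c (k + 1)) atTop (nhds 0) ∧
        ((∃ ε > (0 : ℝ), ∀ k, ε ≤ c k) ∨ Tendsto c atTop atTop)) ∨
      -- (3)
      ((∀ k, 0 ≤ γ k * (β k + γ k)) ∧
        (∃ r > (0 : ℝ), ∀ᶠ k in atTop, r ≤ γ k * (2 * β k + γ k)) ∧
        ((∃ ε > (0 : ℝ), ∀ k, ε ≤ c k) ∨ Tendsto c atTop atTop)) ∨
      -- (4)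
      ((∀ k, 0 ≤ γ k * (β k + γ k)) ∧ (∀ k, 0 ≤ γ k * (2 * β k + γ k)) ∧
        Tendsto (fun n => ∑ k ∈ Finset.range n, γ k * (2 * β k + γ k)) atTop atTop ∧
        (∀ k, |β k + γ k| * |γ k| ≤ max (1 - |β k|) (2 - 2 * |β k + γ k / 2|)) ∧
        (∃ ε > (0 : ℝ), ∀ k, ε ≤ c k) ∧
        Summable (fun k => |c (k + 1) - c k|))) :
    ∃ z : H, (0 : H) ∈ A z ∧
      ∀ w : H, Tendsto (fun k => ⟪x k, w⟫_ℝ) atTop (nhds ⟪z, w⟫_ℝ) := by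
  obtain ⟨p₀, hp₀⟩ := hzer
  have hξ' : ∀ k, |β k + γ k / 2| + |γ k / 2| ≤ 1 := fun k => (hξ k) ▸ hξ1 k
  have hβabs : ∀ k, |β k| ≤ 1 := by
    intro k
    have h1 : β k = (β k + γ k / 2) + (-(γ k / 2)) := by ring
    calc |β k| = |(β k + γ k / 2) + (-(γ k / 2))| := by rw [← h1]
      _ ≤ |β k + γ k / 2| + |(-(γ k / 2))| := abs_add_le _ _
      _ = |β k + γ k / 2| + |γ k / 2| := by rw [abs_neg]
      _ ≤ 1 := hξ' k
  -- error terms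
  set ηg : H → ℕ → ℝ := fun p k => |α k| * ‖u‖ + |1 - β k - γ k| * ‖p‖ + ‖δ k • e k‖ with hηg
  have hηg0 : ∀ p k, 0 ≤ ηg p k := by
    intro p k
    have := abs_nonneg (α k)
    have := abs_nonneg (1 - β k - γ k)
    have := norm_nonneg (δ k • e k)
    have := norm_nonneg u
    have := norm_nonneg p
    positivity
  have hηgsum : ∀ p : H, Summable (ηg p) := by
    intro p
    exact ((hαsum.mul_right ‖u‖).add (hβγsum.mul_right ‖p‖)).add hdesum
  -- recursion identity
  have hid : ∀ (p : H) (k : ℕ), x (k + 1) - p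
      = (β k • (x k - p) + γ k • (J (c k) (x k) - p))
        + (α k • u + (β k + γ k - 1) • p + δ k • e k) := by
    intro p k
    rw [hrec k]
    module
  have hJp : ∀ (p : H) (_ : (0:H) ∈ A p) (k : ℕ),
      J (c k) (x k) - p = (x k - p) - (x k - J (c k) (x k)) := by
    intro p _ k; abel
  -- one step norm inequality
  have hstep_norm : ∀ (p : H) (_ : (0:H) ∈ A p) (k : ℕ),
      ‖x (k + 1) - p‖ ≤ ‖β k • (x k - p) + γ k • (J (c k) (x k) - p)‖ + ηg p k := by
    intro p hp k
    rw [hid p k]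
    refine le_trans (norm_add_le _ _) ?_
    have herr : ‖α k • u + (β k + γ k - 1) • p + δ k • e k‖ ≤ ηg p k := by
      refine le_trans (norm_add_le _ _) ?_
      have h1 : ‖α k • u + (β k + γ k - 1) • p‖ ≤ |α k| * ‖u‖ + |1 - β k - γ k| * ‖p‖ := by
        refine le_trans (norm_add_le _ _) ?_
        rw [norm_smul, norm_smul, Real.norm_eq_abs, Real.norm_eq_abs]
        have : |β k + γ k - 1| = |1 - β k - γ k| := by
          rw [← abs_neg]; congr 1; ring
        rw [this]
      simp only [hηg]
      linarith
    linarith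
  -- contraction of the averaged step
  have hs_le : ∀ (p : H) (_ : (0:H) ∈ A p) (k : ℕ),
      ‖β k • (x k - p) + γ k • (J (c k) (x k) - p)‖ ≤ ‖x k - p‖ := by
    intro p hp k
    rw [hJp p hp k]
    exact ppa_step_a _ _ _ _ (ppa_key_p A hmono J hJ (hc k) p hp (x k)) (hξ' k)
  -- Fejér monotonicity: convergence of ‖x k - p‖ for every zero p
  have fejer : ∀ (p : H), (0:H) ∈ A p →
      ∃ l, Tendsto (fun k => ‖x k - p‖) atTop (nhds l) := by
    intro p hp
    refine ppa_aux_conv _ (ηg p) (fun k => norm_nonneg _) (fun k => ?_) (hηg0 p) (hηgsum p)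
    exact le_trans (hstep_norm p hp k) (by linarith [hs_le p hp k])
  -- global bound
  set M : ℝ := ‖x 0 - p₀‖ + ∑' k, ηg p₀ k with hM
  have hdM : ∀ k, ‖x k - p₀‖ ≤ M := by
    have hpart : ∀ n, ‖x n - p₀‖ ≤ ‖x 0 - p₀‖ + ∑ j ∈ Finset.range n, ηg p₀ j := by
      intro n
      induction n with
      | zero => simp
      | succ n ih =>
        have h1 := hstep_norm p₀ hp₀ n
        have h2 := hs_le p₀ hp₀ n
        rw [Finset.sum_range_succ]
        linarith
    intro k
    have h3 : ∑ j ∈ Finset.range k, ηg p₀ j ≤ ∑' j, ηg p₀ j :=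
      Summable.sum_le_tsum _ (fun j _ => hηg0 p₀ j) (hηgsum p₀)
    calc ‖x k - p₀‖ ≤ ‖x 0 - p₀‖ + ∑ j ∈ Finset.range k, ηg p₀ j := hpart k
      _ ≤ M := by rw [hM]; linarith
  have hM0 : 0 ≤ M := le_trans (norm_nonneg _) (hdM 0)
  have hxB : ∀ k, ‖x k‖ ≤ M + ‖p₀‖ := by
    intro k
    calc ‖x k‖ = ‖(x k - p₀) + p₀‖ := by rw [sub_add_cancel]
      _ ≤ ‖x k - p₀‖ + ‖p₀‖ := norm_add_le _ _
      _ ≤ M + ‖p₀‖ := by linarith [hdM k]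
  have hJfix : ∀ k, J (c k) p₀ = p₀ := fun k => ppa_fixed A hmono J hJ (hc k) p₀ hp₀
  have hTB : ∀ k, ‖J (c k) (x k) - p₀‖ ≤ M := by
    intro k
    calc ‖J (c k) (x k) - p₀‖ = ‖J (c k) (x k) - J (c k) p₀‖ := by rw [hJfix k]
      _ ≤ ‖x k - p₀‖ := ppa_J_nonexp A hmono J hJ (hc k) _ _
      _ ≤ M := hdM k
  set v : ℕ → H := fun k => x k - J (c k) (x k) with hv
  have hvB : ∀ k, ‖v k‖ ≤ 2 * M := by
    intro k
    calc ‖v k‖ = ‖(x k - p₀) - (J (c k) (x k) - p₀)‖ := by simp only [hv]; congr 1; abel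
      _ ≤ ‖x k - p₀‖ + ‖J (c k) (x k) - p₀‖ := norm_sub_le _ _
      _ ≤ 2 * M := by linarith [hdM k, hTB k]
  -- key quantitative inequality
  have keyineq : ∀ k, 0 ≤ γ k * (β k + γ k) →
      γ k * (2 * β k + γ k) * ‖v k‖ ^ 2
        ≤ ‖x k - p₀‖ ^ 2 - ‖x (k + 1) - p₀‖ ^ 2 + ηg p₀ k * (2 * M + ηg p₀ k) := by
    intro k hγ
    have h1 := hstep_norm p₀ hp₀ k
    have h2 := hs_le p₀ hp₀ k
    have h3 : ‖β k • (x k - p₀) + γ k • (J (c k) (x k) - p₀)‖ ^ 2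
        ≤ ‖x k - p₀‖ ^ 2 - γ k * (2 * β k + γ k) * ‖v k‖ ^ 2 := by
      rw [hJp p₀ hp₀ k]
      exact ppa_step_b _ _ _ _ (ppa_key_p A hmono J hJ (hc k) p₀ hp₀ (x k)) (hξ' k) hγ
    have h4 : ‖x (k+1) - p₀‖ ^ 2
        ≤ (‖β k • (x k - p₀) + γ k • (J (c k) (x k) - p₀)‖ + ηg p₀ k) ^ 2 :=
      pow_le_pow_left₀ (norm_nonneg _) h1 2
    have h5 := hdM k
    have h6 := hηg0 p₀ k
    have h7 := norm_nonneg (β k • (x k - p₀) + γ k • (J (c k) (x k) - p₀))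
    nlinarith [h2, h3, h4]
  -- choose the stepsize alternative
  have hcmin : (∃ ε > (0 : ℝ), ∀ k, ε ≤ c k) ∨ Tendsto c atTop atTop := by
    rcases hcase with ⟨_, h⟩ | ⟨_, _, _, _, h⟩ | ⟨_, _, h⟩ | ⟨_, _, _, _, h, _⟩
    · exact h
    · exact h
    · exact h
    · exact Or.inl h
  -- asymptotic regularity
  have hreg : Tendsto (fun k => ‖v k‖) atTop (nhds 0) := by
    obtain ⟨l₀, hl₀⟩ := fejer p₀ hp₀
    have hd2 : Tendsto (fun k => ‖x k - p₀‖ ^ 2) atTop (nhds (l₀ ^ 2)) := by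
      simpa [pow_two] using hl₀.mul hl₀
    have hησ : Tendsto (fun k => ηg p₀ k) atTop (nhds 0) := (hηgsum p₀).tendsto_atTop_zero
    have habs0 : Tendsto (fun k => |1 - β k - γ k|) atTop (nhds 0) :=
      hβγsum.tendsto_atTop_zero
    have hβγ0 : Tendsto (fun k => 1 - β k - γ k) atTop (nhds 0) := by
      have hlow : Tendsto (fun k => -|1 - β k - γ k|) atTop (nhds 0) := by
        simpa using habs0.neg
      refine tendsto_of_tendsto_of_tendsto_of_le_of_le hlow habs0 ?_ ?_
      · intro k; exact neg_abs_le _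
      · intro k; exact le_abs_self _
    have hsq_of_event : (∃ r > (0:ℝ), ∀ᶠ k in atTop,
        0 ≤ γ k * (β k + γ k) ∧ r ≤ γ k * (2 * β k + γ k)) →
        Tendsto (fun k => ‖v k‖) atTop (nhds 0) := by
      rintro ⟨r, hr, hev⟩
      have h1 : Tendsto (fun k => ‖x (k + 1) - p₀‖ ^ 2) atTop (nhds (l₀ ^ 2)) := by
        have := hd2.comp (tendsto_add_atTop_nat 1)
        exact this
      have h2 : Tendsto (fun k => ηg p₀ k * (2 * M + ηg p₀ k)) atTop (nhds 0) := by
        have h2' : Tendsto (fun k => 2 * M + ηg p₀ k) atTop (nhds (2 * M + 0)) :=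
          tendsto_const_nhds.add hησ
        have h2'' := hησ.mul h2'
        simpa using h2''
      have hub : Tendsto (fun k =>
          (‖x k - p₀‖ ^ 2 - ‖x (k + 1) - p₀‖ ^ 2 + ηg p₀ k * (2 * M + ηg p₀ k)) / r)
          atTop (nhds 0) := by
        have := ((hd2.sub h1).add h2).div_const r
        simpa using this
      have hsq : Tendsto (fun k => ‖v k‖ ^ 2) atTop (nhds 0) := by
        refine tendsto_of_tendsto_of_tendsto_of_le_of_le' tendsto_const_nhds hub ?_ ?_
        · exact Eventually.of_forall fun k => sq_nonneg _
        · filter_upwards [hev] with k hk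
          have hkey := keyineq k hk.1
          rw [le_div_iff₀ hr]
          nlinarith [sq_nonneg ‖v k‖, hk.2]
      have h5 := hsq.sqrt
      have heq : (fun k => Real.sqrt (‖v k‖ ^ 2)) = fun k => ‖v k‖ :=
        funext fun k => Real.sqrt_sq (norm_nonneg _)
      rw [heq] at h5
      simpa using h5
    rcases hcase with ⟨hγ1, _⟩ | ⟨⟨r, hr, hrev⟩, ⟨a, ha, haev⟩, ⟨b, hb, hbev⟩, _, _⟩ |
      ⟨h31, ⟨r, hr, hrev⟩, _⟩ | ⟨h41, h42, h43, _, ⟨ε, hε, hεc⟩, hΔ⟩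
    · -- case 1
      apply hsq_of_event
      have hβ0 : Tendsto β atTop (nhds 0) := by
        have hfe : β = fun k => (1 - (1 - β k - γ k)) - γ k := funext fun k => by ring
        rw [hfe]
        have hb' : Tendsto (fun k => (1 - (1 - β k - γ k)) - γ k) atTop
            (nhds ((1 - 0) - 1)) := (tendsto_const_nhds.sub hβγ0).sub hγ1
        simpa using hb'
      have hco1 : Tendsto (fun k => γ k * (β k + γ k)) atTop (nhds 1) := by
        have hco1' : Tendsto (fun k => γ k * (β k + γ k)) atTop (nhds (1 * (0 + 1))) :=
          hγ1.mul (hβ0.add hγ1)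
        simpa using hco1'
      have hco2 : Tendsto (fun k => γ k * (2 * β k + γ k)) atTop (nhds 1) := by
        have hco2' : Tendsto (fun k => γ k * (2 * β k + γ k)) atTop (nhds (1 * (2 * 0 + 1))) :=
          hγ1.mul ((hβ0.const_mul 2).add hγ1)
        simpa using hco2'
      refine ⟨1/2, by norm_num, ?_⟩
      filter_upwards [hco1.eventually (lt_mem_nhds (show (0:ℝ) < 1 by norm_num)),
        hco2.eventually (lt_mem_nhds (show (1/2:ℝ) < 1 by norm_num))] with k hk1 hk2
      exact ⟨le_of_lt hk1, le_of_lt hk2⟩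
    · -- case 2
      apply hsq_of_event
      have hr0 : (0:ℝ) ≤ r := by
        obtain ⟨k₀, hk₀⟩ := hrev.exists
        exact le_trans (abs_nonneg _) hk₀
      refine ⟨((1 - r) / 2) * (2 - 2 * b), by nlinarith, ?_⟩
      have hsmall : ∀ᶠ k in atTop, |1 - β k - γ k| < (1 - r) / 2 :=
        habs0.eventually (gt_mem_nhds (by linarith))
      filter_upwards [hrev, hbev, hsmall] with k hk1 hk2 hk3
      have hβk := abs_le.1 hk1
      have habk := abs_lt.1 hk3
      have hγlb : (1 - r) / 2 ≤ γ k := by linarith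
      have h2βγ : 2 - 2 * b ≤ 2 * β k + γ k := by linarith
      have hβγpos : 0 ≤ β k + γ k := by linarith
      constructor
      · exact mul_nonneg (by linarith) hβγpos
      · nlinarith
    · -- case 3
      apply hsq_of_event
      exact ⟨r, hr, hrev.mono fun k hk => ⟨h31 k, hk⟩⟩
    · -- case 4
      have hη2sum : Summable (fun k => ηg p₀ k * (2 * M + ηg p₀ k)) := by
        set R := ∑' k, ηg p₀ k with hR
        have hRle : ∀ k, ηg p₀ k ≤ R := fun k =>
          Summable.le_tsum (hηgsum p₀) k (fun j _ => hηg0 p₀ j)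
        refine Summable.of_nonneg_of_le
          (fun k => mul_nonneg (hηg0 p₀ k) (by linarith [hηg0 p₀ k, hM0]))
          (fun k => ?_) ((hηgsum p₀).mul_right (2 * M + R))
        exact mul_le_mul_of_nonneg_left (by linarith [hRle k]) (hηg0 p₀ k)
      set C : ℝ := ‖x 0 - p₀‖ ^ 2 + ∑' k, ηg p₀ k * (2 * M + ηg p₀ k) with hC
      have hW0 : ∀ k, 0 ≤ γ k * (2 * β k + γ k) * ‖v k‖ ^ 2 :=
        fun k => mul_nonneg (h42 k) (sq_nonneg _)
      have hWsum : ∀ n, ∑ k ∈ Finset.range n, γ k * (2 * β k + γ k) * ‖v k‖ ^ 2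
          ≤ ‖x 0 - p₀‖ ^ 2 - ‖x n - p₀‖ ^ 2
            + ∑ k ∈ Finset.range n, ηg p₀ k * (2 * M + ηg p₀ k) := by
        intro n
        induction n with
        | zero => simp
        | succ n ih =>
          rw [Finset.sum_range_succ, Finset.sum_range_succ]
          have := keyineq n (h41 n)
          linarith
      have hWC : ∀ n, ∑ k ∈ Finset.range n, γ k * (2 * β k + γ k) * ‖v k‖ ^ 2 ≤ C := by
        intro n
        have h3 : ∑ k ∈ Finset.range n, ηg p₀ k * (2 * M + ηg p₀ k)
            ≤ ∑' k, ηg p₀ k * (2 * M + ηg p₀ k) :=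
          Summable.sum_le_tsum _ (fun k _ => mul_nonneg (hηg0 p₀ k) (by linarith [hηg0 p₀ k, hM0]))
            hη2sum
        have := hWsum n
        have h4 := sq_nonneg ‖x n - p₀‖
        rw [hC]
        linarith
      have hC0 : 0 ≤ C := le_trans (by simp) (hWC 0)
      -- frequently small
      have hfreqsmall : ∀ ε' > (0:ℝ), ∃ᶠ k in atTop, ‖v k‖ < ε' := by
        intro ε' hε'
        rw [frequently_atTop]
        by_contra hcontra
        push_neg at hcontra
        obtain ⟨N, hN⟩ := hcontra
        set C₀ : ℝ := ∑ k ∈ Finset.range N, γ k * (2 * β k + γ k) + C / ε' ^ 2 with hC₀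
        have hbound : ∀ n, ∑ k ∈ Finset.range n, γ k * (2 * β k + γ k) ≤ C₀ := by
          intro n
          rcases le_or_gt n N with hn | hn
          · have h5 : ∑ k ∈ Finset.range n, γ k * (2 * β k + γ k)
                ≤ ∑ k ∈ Finset.range N, γ k * (2 * β k + γ k) :=
              Finset.sum_le_sum_of_subset_of_nonneg
                (Finset.range_subset_range.2 hn) (fun k _ _ => h42 k)
            have h6 : 0 ≤ C / ε' ^ 2 := div_nonneg hC0 (sq_nonneg _)
            rw [hC₀]; linarith
          · have hNn : N ≤ n := le_of_lt hn
            have hsplit : ∑ k ∈ Finset.range N, γ k * (2 * β k + γ k)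
                + ∑ k ∈ Finset.Ico N n, γ k * (2 * β k + γ k)
                = ∑ k ∈ Finset.range n, γ k * (2 * β k + γ k) := by
              simp only [Finset.range_eq_Ico]
              exact Finset.sum_Ico_consecutive _ (Nat.zero_le N) hNn
            have hIco : ∑ k ∈ Finset.Ico N n, γ k * (2 * β k + γ k) ≤ C / ε' ^ 2 := by
              have hterm : ∀ k ∈ Finset.Ico N n,
                  γ k * (2 * β k + γ k) * ε' ^ 2
                    ≤ γ k * (2 * β k + γ k) * ‖v k‖ ^ 2 := by
                intro k hk
                have hkN : N ≤ k := (Finset.mem_Ico.1 hk).1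
                have hvk : ε' ≤ ‖v k‖ := hN k hkN
                have hsq' : ε' ^ 2 ≤ ‖v k‖ ^ 2 := by nlinarith
                exact mul_le_mul_of_nonneg_left hsq' (h42 k)
              have hsum1 : (∑ k ∈ Finset.Ico N n, γ k * (2 * β k + γ k)) * ε' ^ 2
                  ≤ ∑ k ∈ Finset.Ico N n, γ k * (2 * β k + γ k) * ‖v k‖ ^ 2 := by
                rw [Finset.sum_mul]
                exact Finset.sum_le_sum hterm
              have hsub : Finset.Ico N n ⊆ Finset.range n := by
                intro k hk
                rw [Finset.mem_range]
                exact (Finset.mem_Ico.1 hk).2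
              have hsum2 : ∑ k ∈ Finset.Ico N n, γ k * (2 * β k + γ k) * ‖v k‖ ^ 2
                  ≤ ∑ k ∈ Finset.range n, γ k * (2 * β k + γ k) * ‖v k‖ ^ 2 :=
                Finset.sum_le_sum_of_subset_of_nonneg hsub (fun k _ _ => hW0 k)
              rw [le_div_iff₀ (pow_pos hε' 2)]
              linarith [hWC n]
            rw [hC₀, ← hsplit]
            linarith
        obtain ⟨n, hn⟩ := (h43.eventually (eventually_gt_atTop C₀)).exists
        exact absurd (hbound n) (not_le.2 hn)
      -- almost decreasing
      set ρ : ℕ → ℝ := fun k => |α k| * ‖u‖ + ‖δ k • e k‖ + |1 - β k - γ k| * (M + ‖p₀‖)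
        with hρdef
      have hρ0 : ∀ k, 0 ≤ ρ k := by
        intro k
        have := abs_nonneg (α k)
        have := abs_nonneg (1 - β k - γ k)
        have := norm_nonneg (δ k • e k)
        have := norm_nonneg u
        have := norm_nonneg p₀
        have := hM0
        positivity
      have hρsum : Summable ρ :=
        ((hαsum.mul_right ‖u‖).add hdesum).add (hβγsum.mul_right (M + ‖p₀‖))
      set R' : ℝ := ∑' k, ρ k with hR'
      have hρle : ∀ k, ρ k ≤ R' := fun k => Summable.le_tsum hρsum k (fun j _ => hρ0 j)
      have hR'0 : 0 ≤ R' := le_trans (hρ0 0) (hρle 0)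
      set ζ : ℕ → ℝ := fun k => ρ k + (|c (k + 1) - c k| / ε) * (2 * M + R') with hζdef
      have hζ0 : ∀ k, 0 ≤ ζ k := by
        intro k
        have h6 : 0 ≤ (|c (k + 1) - c k| / ε) * (2 * M + R') :=
          mul_nonneg (div_nonneg (abs_nonneg _) (le_of_lt hε)) (by linarith)
        exact add_nonneg (hρ0 k) h6
      have hζsum : Summable ζ :=
        hρsum.add ((hΔ.div_const ε).mul_right (2 * M + R'))
      have hJxB : ∀ k, ‖J (c k) (x k)‖ ≤ M + ‖p₀‖ := by
        intro k
        calc ‖J (c k) (x k)‖ = ‖(J (c k) (x k) - p₀) + p₀‖ := by rw [sub_add_cancel]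
          _ ≤ ‖J (c k) (x k) - p₀‖ + ‖p₀‖ := norm_add_le _ _
          _ ≤ M + ‖p₀‖ := by linarith [hTB k]
      have hstepv : ∀ k, ‖v (k + 1)‖ ≤ ‖v k‖ + ζ k := by
        intro k
        set y' : H := β k • x k + (1 - β k) • J (c k) (x k) with hy'
        have hxy : ‖x (k + 1) - y'‖ ≤ ρ k := by
          have hidd : x (k + 1) - y'
              = α k • u + δ k • e k + (γ k - (1 - β k)) • J (c k) (x k) := by
            simp only [hy']
            rw [hrec k]
            module
          rw [hidd]
          refine le_trans (norm_add_le _ _) ?_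
          have h7 : ‖α k • u + δ k • e k‖ ≤ |α k| * ‖u‖ + ‖δ k • e k‖ := by
            refine le_trans (norm_add_le _ _) ?_
            rw [norm_smul, Real.norm_eq_abs]
          have h8 : ‖(γ k - (1 - β k)) • J (c k) (x k)‖
              ≤ |1 - β k - γ k| * (M + ‖p₀‖) := by
            rw [norm_smul, Real.norm_eq_abs]
            have h9 : |γ k - (1 - β k)| = |1 - β k - γ k| := by
              rw [← abs_neg]; congr 1; ring
            rw [h9]
            exact mul_le_mul_of_nonneg_left (hJxB k) (abs_nonneg _)
          simp only [hρdef]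
          linarith
        have hLbound : ‖y' - J (c k) y'‖ ≤ ‖v k‖ := by
          refine ppa_L (v k) (y' - J (c k) y') (β k)
            (abs_le.1 (hβabs k)).2 (abs_le.1 (hβabs k)).1 ?_
          have hfirm := ppa_firm_disp A hmono J hJ (hc k) y' (x k)
          have hyx : y' - x k = -((1 - β k) • v k) := by
            simp only [hy', hv]
            module
          rw [hyx] at hfirm
          exact hfirm
        have h1 : ‖x (k + 1) - J (c k) (x (k + 1))‖ ≤ ‖v k‖ + ρ k := by
          have hne := ppa_disp_nonexp A hmono J hJ (hc k) (x (k + 1)) y'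
          calc ‖x (k + 1) - J (c k) (x (k + 1))‖
              ≤ ‖y' - J (c k) y'‖ + ‖(x (k + 1) - J (c k) (x (k + 1))) - (y' - J (c k) y')‖ :=
                norm_le_insert' _ _
            _ ≤ ‖v k‖ + ρ k := by linarith
        have h2 : ‖J (c k) (x (k + 1)) - J (c (k + 1)) (x (k + 1))‖
            ≤ (|c (k + 1) - c k| / ε) * (2 * M + R') := by
          have hri := ppa_res_id A hmono J hJ (hc (k + 1)) (hc k) (x (k + 1))
          rw [norm_sub_rev]
          refine le_trans hri ?_
          have hq1 : |c (k + 1) - c k| / c k ≤ |c (k + 1) - c k| / ε := by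
            gcongr
            exact hεc k
          have hz1 : ‖x (k + 1) - J (c k) (x (k + 1))‖ ≤ 2 * M + R' :=
            le_trans h1 (by linarith [hvB k, hρle k])
          exact mul_le_mul hq1 hz1 (norm_nonneg _)
            (div_nonneg (abs_nonneg _) (le_of_lt hε))
        calc ‖v (k + 1)‖
            = ‖(x (k + 1) - J (c k) (x (k + 1)))
                + (J (c k) (x (k + 1)) - J (c (k + 1)) (x (k + 1)))‖ := by
              simp only [hv]
              congr 1
              abel
          _ ≤ ‖x (k + 1) - J (c k) (x (k + 1))‖
              + ‖J (c k) (x (k + 1)) - J (c (k + 1)) (x (k + 1))‖ := norm_add_le _ _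
          _ ≤ ‖v k‖ + ζ k := by
              have hζk : ζ k = ρ k + |c (k + 1) - c k| / ε * (2 * M + R') := rfl
              rw [hζk, ← add_assoc]
              exact add_le_add h1 h2
      obtain ⟨l, hl⟩ := ppa_aux_conv (fun k => ‖v k‖) ζ (fun k => norm_nonneg _)
        hstepv hζ0 hζsum
      have hge : 0 ≤ l := ge_of_tendsto hl (Eventually.of_forall fun k => norm_nonneg _)
      have hl0 : l ≤ 0 := by
        by_contra hpos
        push_neg at hpos
        have hev2 : ∀ᶠ k in atTop, l / 2 < ‖v k‖ :=
          hl.eventually (lt_mem_nhds (by linarith))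
        obtain ⟨k, hk1, hk2⟩ := ((hfreqsmall (l / 2) (by linarith)).and_eventually hev2).exists
        linarith
      have hlz : l = 0 := le_antisymm hl0 hge
      rw [hlz] at hl
      exact hl
  -- strong convergence of the operator values
  have hu0 : Tendsto (fun k => ‖(1 / c k) • v k‖) atTop (nhds 0) := by
    have heq : ∀ k, ‖(1 / c k) • v k‖ = (1 / c k) * ‖v k‖ := by
      intro k
      rw [norm_smul, Real.norm_eq_abs, abs_of_pos (one_div_pos.2 (hc k))]
    rcases hcmin with ⟨ε, hεpos, hεle⟩ | hcinf
    · have hb : ∀ k, ‖(1 / c k) • v k‖ ≤ (1 / ε) * ‖v k‖ := by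
        intro k
        rw [heq k]
        have h1 : 1 / c k ≤ 1 / ε := one_div_le_one_div_of_le hεpos (hεle k)
        exact mul_le_mul_of_nonneg_right h1 (norm_nonneg _)
      have hup : Tendsto (fun k => (1 / ε) * ‖v k‖) atTop (nhds 0) := by
        simpa using hreg.const_mul (1 / ε)
      exact tendsto_of_tendsto_of_tendsto_of_le_of_le tendsto_const_nhds hup
        (fun k => norm_nonneg _) hb
    · have hinv : Tendsto (fun k => 1 / c k) atTop (nhds 0) :=
        tendsto_const_nhds.div_atTop hcinf
      have hb : ∀ k, ‖(1 / c k) • v k‖ ≤ (1 / c k) * (2 * M) := by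
        intro k
        rw [heq k]
        exact mul_le_mul_of_nonneg_left (hvB k) (le_of_lt (one_div_pos.2 (hc k)))
      have hup : Tendsto (fun k => (1 / c k) * (2 * M)) atTop (nhds 0) := by
        simpa using hinv.mul_const (2 * M)
      exact tendsto_of_tendsto_of_tendsto_of_le_of_le tendsto_const_nhds hup
        (fun k => norm_nonneg _) hb
  -- weak cluster machinery
  have hcluster : ∀ φ : ℕ → ℕ, StrictMono φ →
      ∃ z : H, ∀ w : H, MapClusterPt (⟪z, w⟫_ℝ) atTop (fun k => ⟪x (φ k), w⟫_ℝ) := by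
    intro φ hφ
    exact ppa_exists_weak_cluster (fun k => x (φ k)) (M + ‖p₀‖) (fun k => hxB _)
  have hsubfull : ∀ (t : ℕ → ℝ) (r : ℝ) (φ : ℕ → ℕ), StrictMono φ →
      MapClusterPt r atTop (fun k => t (φ k)) → MapClusterPt r atTop t := by
    intro t r φ hφ hcl
    have h1 : map (fun k => t (φ k)) atTop ≤ map t atTop := by
      rw [show (fun k => t (φ k)) = t ∘ φ from rfl, ← map_map]
      exact map_mono hφ.tendsto_atTop
    exact ClusterPt.mono hcl h1
  have hinzer : ∀ z : H,
      (∀ w : H, MapClusterPt (⟪z, w⟫_ℝ) atTop (fun k => ⟪x k, w⟫_ℝ)) → (0:H) ∈ A z := by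
    intro z hz
    apply hmax
    intro y yv hyv
    set θ : ℕ → ℝ := fun k => ⟪J (c k) (x k) - y, (1 / c k) • v k⟫_ℝ + ⟪v k, yv⟫_ℝ with hθdef
    have hθ0 : Tendsto θ atTop (nhds 0) := by
      have hb : ∀ k, |θ k| ≤ (M + ‖p₀‖ + ‖y‖) * ‖(1 / c k) • v k‖ + ‖yv‖ * ‖v k‖ := by
        intro k
        have h1 : |⟪J (c k) (x k) - y, (1 / c k) • v k⟫_ℝ|
            ≤ ‖J (c k) (x k) - y‖ * ‖(1 / c k) • v k‖ := abs_real_inner_le_norm _ _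
        have h2 : |⟪v k, yv⟫_ℝ| ≤ ‖v k‖ * ‖yv‖ := abs_real_inner_le_norm _ _
        have h3 : ‖J (c k) (x k) - y‖ ≤ M + ‖p₀‖ + ‖y‖ := by
          calc ‖J (c k) (x k) - y‖ ≤ ‖J (c k) (x k) - p₀‖ + ‖p₀ - y‖ := norm_sub_le_norm_sub_add_norm_sub _ _ _
            _ ≤ M + (‖p₀‖ + ‖y‖) := by
                have := hTB k
                have h4 : ‖p₀ - y‖ ≤ ‖p₀‖ + ‖y‖ := norm_sub_le _ _
                linarith
            _ = M + ‖p₀‖ + ‖y‖ := by ring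
        calc |θ k| ≤ |⟪J (c k) (x k) - y, (1 / c k) • v k⟫_ℝ| + |⟪v k, yv⟫_ℝ| := abs_add_le _ _
          _ ≤ (M + ‖p₀‖ + ‖y‖) * ‖(1 / c k) • v k‖ + ‖yv‖ * ‖v k‖ := by
              have h5 : ‖J (c k) (x k) - y‖ * ‖(1 / c k) • v k‖
                  ≤ (M + ‖p₀‖ + ‖y‖) * ‖(1 / c k) • v k‖ :=
                mul_le_mul_of_nonneg_right h3 (norm_nonneg _)
              have h6 : ‖v k‖ * ‖yv‖ = ‖yv‖ * ‖v k‖ := mul_comm _ _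
              linarith
      have hup : Tendsto (fun k => (M + ‖p₀‖ + ‖y‖) * ‖(1 / c k) • v k‖ + ‖yv‖ * ‖v k‖)
          atTop (nhds 0) := by
        have := (hu0.const_mul (M + ‖p₀‖ + ‖y‖)).add (hreg.const_mul ‖yv‖)
        simpa using this
      have hlow : Tendsto (fun k => -((M + ‖p₀‖ + ‖y‖) * ‖(1 / c k) • v k‖ + ‖yv‖ * ‖v k‖))
          atTop (nhds 0) := by
        simpa using hup.neg
      refine tendsto_of_tendsto_of_tendsto_of_le_of_le hlow hup ?_ ?_
      · intro k; linarith [(abs_le.1 (hb k)).1]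
      · intro k; linarith [(abs_le.1 (hb k)).2]
    have hub : ∀ᶠ k in atTop, ⟪y, -yv⟫_ℝ ≤ ⟪x k, -yv⟫_ℝ + θ k := by
      refine Eventually.of_forall fun k => ?_
      have h := hmono (J (c k) (x k)) y ((1 / c k) • (x k - J (c k) (x k))) yv
        (hJ (c k) (hc k) (x k)) hyv
      have hexpand : ⟪J (c k) (x k) - y, (1 / c k) • (x k - J (c k) (x k)) - yv⟫_ℝ
          = (⟪x k, -yv⟫_ℝ - ⟪y, -yv⟫_ℝ) + θ k := by
        simp only [hθdef, hv]
        rw [inner_sub_right]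
        simp only [inner_neg_right]
        have h1 : ⟪J (c k) (x k) - y, yv⟫_ℝ
            = ⟪x k, yv⟫_ℝ - ⟪y, yv⟫_ℝ - ⟪x k - J (c k) (x k), yv⟫_ℝ := by
          rw [show J (c k) (x k) - y = (x k) - y - (x k - J (c k) (x k)) by abel,
            inner_sub_left, inner_sub_left]
        rw [h1]
        ring
      rw [hexpand] at h
      linarith
    have hcl := hz (-yv)
    have hle := ppa_cluster_le _ _ _ _ hcl hub hθ0
    have : (0:ℝ) ≤ ⟪z, -yv⟫_ℝ - ⟪y, -yv⟫_ℝ := by linarith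
    calc (0:ℝ) ≤ ⟪z, -yv⟫_ℝ - ⟪y, -yv⟫_ℝ := this
      _ = ⟪z - y, (0:H) - yv⟫_ℝ := by
          rw [zero_sub, inner_sub_left]
  have huniq : ∀ z₁ z₂ : H, (0:H) ∈ A z₁ → (0:H) ∈ A z₂ →
      (∀ w : H, MapClusterPt (⟪z₁, w⟫_ℝ) atTop (fun k => ⟪x k, w⟫_ℝ)) →
      (∀ w : H, MapClusterPt (⟪z₂, w⟫_ℝ) atTop (fun k => ⟪x k, w⟫_ℝ)) → z₁ = z₂ := by
    intro z₁ z₂ hz₁ hz₂ hcl₁ hcl₂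
    obtain ⟨l₁, hl₁⟩ := fejer z₁ hz₁
    obtain ⟨l₂, hl₂⟩ := fejer z₂ hz₂
    set g : ℕ → ℝ := fun k => ⟪x k, z₁ - z₂⟫_ℝ with hg
    have hgid : ∀ k, g k
        = (‖x k - z₂‖ ^ 2 - ‖x k - z₁‖ ^ 2 - ‖z₂‖ ^ 2 + ‖z₁‖ ^ 2) / 2 := by
      intro k
      have e1 : ‖x k - z₁‖ ^ 2 = ‖x k‖ ^ 2 - 2 * ⟪x k, z₁⟫_ℝ + ‖z₁‖ ^ 2 := norm_sub_sq_real _ _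
      have e2 : ‖x k - z₂‖ ^ 2 = ‖x k‖ ^ 2 - 2 * ⟪x k, z₂⟫_ℝ + ‖z₂‖ ^ 2 := norm_sub_sq_real _ _
      have e3 : g k = ⟪x k, z₁⟫_ℝ - ⟪x k, z₂⟫_ℝ := by
        simp only [hg]; rw [inner_sub_right]
      rw [e3]; rw [e1] at *; linarith
    have hgconv : Tendsto g atTop
        (nhds ((l₂ ^ 2 - l₁ ^ 2 - ‖z₂‖ ^ 2 + ‖z₁‖ ^ 2) / 2)) := by
      have h1 : Tendsto (fun k => ‖x k - z₁‖ ^ 2) atTop (nhds (l₁ ^ 2)) := by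
        simpa [pow_two] using hl₁.mul hl₁
      have h2 : Tendsto (fun k => ‖x k - z₂‖ ^ 2) atTop (nhds (l₂ ^ 2)) := by
        simpa [pow_two] using hl₂.mul hl₂
      have h4 : Tendsto (fun k => (‖x k - z₂‖ ^ 2 - ‖x k - z₁‖ ^ 2 - ‖z₂‖ ^ 2 + ‖z₁‖ ^ 2) / 2)
          atTop (nhds ((l₂ ^ 2 - l₁ ^ 2 - ‖z₂‖ ^ 2 + ‖z₁‖ ^ 2) / 2)) :=
        (((h2.sub h1).sub tendsto_const_nhds).add tendsto_const_nhds).div_const 2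
      have : g = fun k => (‖x k - z₂‖ ^ 2 - ‖x k - z₁‖ ^ 2 - ‖z₂‖ ^ 2 + ‖z₁‖ ^ 2) / 2 := by
        funext k; exact hgid k
      rw [this]
      exact h4
    have hr₁ := ppa_cluster_eq g _ _ (hcl₁ (z₁ - z₂)) hgconv
    have hr₂ := ppa_cluster_eq g _ _ (hcl₂ (z₁ - z₂)) hgconv
    have : ⟪z₁ - z₂, z₁ - z₂⟫_ℝ = 0 := by
      rw [inner_sub_left]
      linarith
    have := inner_self_eq_zero.1 this
    exact sub_eq_zero.1 this
  -- conclusion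
  obtain ⟨z, hzcl⟩ := hcluster id strictMono_id
  have hzcl' : ∀ w : H, MapClusterPt (⟪z, w⟫_ℝ) atTop (fun k => ⟪x k, w⟫_ℝ) := by
    simpa using hzcl
  have hz0 : (0:H) ∈ A z := hinzer z hzcl'
  refine ⟨z, hz0, fun w => ?_⟩
  by_contra hnot
  rw [Metric.tendsto_atTop] at hnot
  push_neg at hnot
  obtain ⟨ε, hεpos, hN⟩ := hnot
  have hfreq : ∀ N : ℕ, ∃ n > N, ε ≤ dist ⟪x n, w⟫_ℝ ⟪z, w⟫_ℝ := by
    intro N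
    obtain ⟨n, hn1, hn2⟩ := hN (N + 1)
    exact ⟨n, lt_of_lt_of_le (Nat.lt_succ_self N) hn1, hn2⟩
  obtain ⟨φ, hφmono, hφprop⟩ := extraction_of_frequently_atTop (frequently_atTop'.2 hfreq)
  obtain ⟨z', hz'cl⟩ := hcluster φ hφmono
  have hz'full : ∀ w' : H, MapClusterPt (⟪z', w'⟫_ℝ) atTop (fun k => ⟪x k, w'⟫_ℝ) :=
    fun w' => hsubfull _ _ φ hφmono (hz'cl w')
  have hz'0 : (0:H) ∈ A z' := hinzer z' hz'full
  have hzz : z' = z := huniq z' z hz'0 hz0 hz'full hzcl'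
  have hclw : MapClusterPt (⟪z, w⟫_ℝ) atTop (fun k => ⟪x (φ k), w⟫_ℝ) := by
    rw [← hzz]; exact hz'cl w
  have hball : ∃ᶠ k in atTop, ⟪x (φ k), w⟫_ℝ ∈ Metric.ball (⟪z, w⟫_ℝ) ε :=
    (mapClusterPt_iff_frequently.1 hclw) _ (Metric.ball_mem_nhds _ hεpos)
  obtain ⟨k, hk⟩ := hball.exists
  rw [Metric.mem_ball] at hk
  exact absurd hk (not_lt.2 (hφprop k))
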